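/- arXiv:0909.2430 — 2 statements merged into one kernel-verified Lean document; each statement's English description precedes it below -/
import Mathlib

section
/- Let G be a totally ordered abelian group and μ a finite subset of {g < 1}. Let A, B, C be nonzero grid-based series over G. If A ≺^μ B (every a ∈ supp A satisfies a ∈ b·μ⁺ for some b ∈ supp B), B ∼ C (mag B = mag C), and μ witnesses B (supp B ⊆ (mag B)·μ*), then A ≺^μ C. -/
/- Additive convention: magnitude of a Hahn series is `HahnSeries.order` (least exponent);
a monomial is small iff its exponent is positive; a ratio set is a finite set of
positive exponents. -/

/-- `μ⁺`: finite nonempty sums of elements of `s`. -/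
def addPlus {Γ : Type*} [AddCommMonoid Γ] (s : Set Γ) : Set Γ :=
  {x | ∃ a ∈ s, ∃ b ∈ AddSubmonoid.closure s, x = a + b}

/-- `A ≺^μ B`. -/
def hPrec {Γ : Type*} [AddCommGroup Γ] [LinearOrder Γ] [IsOrderedAddMonoid Γ] (μ : Set Γ)
    (A B : HahnSeries Γ ℝ) : Prop :=
  ∀ a ∈ A.support, ∃ b ∈ B.support, ∃ p ∈ addPlus μ, a = b + p

/-- `μ` witnesses `A`: `supp A ⊆ mag A + μ*`. -/
def hWitnesses {Γ : Type*} [AddCommGroup Γ] [LinearOrder Γ] [IsOrderedAddMonoid Γ] (μ : Set Γ)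
    (A : HahnSeries Γ ℝ) : Prop :=
  ∀ a ∈ A.support, ∃ p ∈ AddSubmonoid.closure μ, a = A.order + p

/-- If `A ≺^μ B`, `B ∼ C` (same magnitude), and `μ` witnesses `B`, then `A ≺^μ C`. -/
theorem stmt15 {Γ : Type*} [AddCommGroup Γ] [LinearOrder Γ] [IsOrderedAddMonoid Γ]
    (μ : Finset Γ) (hμ : ∀ x ∈ μ, 0 < x)
    (A B C : HahnSeries Γ ℝ) (hA : A ≠ 0) (hB : B ≠ 0) (hC : C ≠ 0)
    (hAB : hPrec (μ : Set Γ) A B) (hmag : B.order = C.order)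
    (hwit : hWitnesses (μ : Set Γ) B) :
    hPrec (μ : Set Γ) A C := by
  intro a ha
  obtain ⟨b, hb, p, ⟨m, hm, r, hr, hp⟩, hap⟩ := hAB a ha
  obtain ⟨q, hq, hbq⟩ := hwit b hb
  refine ⟨C.order, fun h => hC (HahnSeries.coeff_order_eq_zero.mp h), m + (q + r),
    ⟨m, hm, q + r, AddSubmonoid.add_mem _ hq hr, rfl⟩, ?_⟩
  rw [hap, hbq, hp, hmag]
  abel
end

section
/- Let G be a totally ordered abelian group, μ a finite subset of {g < 1}, and A a nonzero Hahn series witnessed by μ, written A = a·g·(1+S) with a ∈ ℝ∖{0}, g = mag A, and supp S ⊆ μ⁺. Then for every b ∈ ℝ, the series A^b := a^b g^b ∑_{j≥0} C(b,j) S^j (binomial series, assuming a > 0 and that g^b makes sense, e.g. G divisible) is a well-defined Hahn series witnessed by μ, i.e., supp(A^b) ⊆ g^b·μ*. In particular the multiplicative inverse A^{-1} is witnessed by μ. -/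
/-- The generalized binomial coefficient `C(b, j)` for real `b`. -/
noncomputable def realChoose (b : ℝ) (j : ℕ) : ℝ :=
  (∏ i ∈ Finset.range j, (b - i)) / (j.factorial : ℝ)

lemma addPlus_subset_closure {Γ : Type*} [AddCommMonoid Γ] (s : Set Γ) :
    addPlus s ⊆ AddSubmonoid.closure s := by
  rintro x ⟨a, ha, c, hc, rfl⟩
  exact add_mem (AddSubmonoid.subset_closure ha) hc

lemma realChoose_neg_one (j : ℕ) : realChoose (-1) j = (-1) ^ j := by
  induction j with
  | zero => simp [realChoose]
  | succ n ih =>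
    have hfac : (n.factorial : ℝ) ≠ 0 := Nat.cast_ne_zero.mpr n.factorial_ne_zero
    rw [realChoose, Finset.prod_range_succ, Nat.factorial_succ] at *
    push_cast
    rw [pow_succ]
    field_simp at ih ⊢
    rw [ih]; ring

/-- Scaling a summable family by scalars keeps it summable. -/
noncomputable def HahnSeries.SummableFamily.rescale {Γ : Type*} [AddCommGroup Γ] [LinearOrder Γ] [IsOrderedAddMonoid Γ]
    (c : ℕ → ℝ) (s : HahnSeries.SummableFamily Γ ℝ ℕ) : HahnSeries.SummableFamily Γ ℝ ℕ where
  toFun n := c n • s n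
  isPWO_iUnion_support' := by
    refine s.isPWO_iUnion_support.mono (Set.iUnion_subset fun n x hx => ?_)
    refine Set.mem_iUnion.2 ⟨n, ?_⟩
    simp only [HahnSeries.mem_support, HahnSeries.coeff_smul] at hx ⊢
    exact right_ne_zero_of_smul hx
  finite_co_support' g := by
    refine (s.finite_co_support g).subset fun n hn => ?_
    simp only [Set.mem_setOf_eq, HahnSeries.coeff_smul] at hn ⊢
    exact right_ne_zero_of_smul hn

/-- Binomial powers: if `A = a·g·(1+S)` with `a > 0`, `g = mag A`, and `supp S ⊆ μ⁺`
(so `μ` witnesses `A`), then for every `b ∈ ℝ` the binomial series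
`A^b = a^b g^b ∑ C(b,j) S^j` is a well-defined Hahn series witnessed by `μ`, i.e. its
support lies in `b•g + μ*`; in particular for `b = -1` it is the multiplicative inverse
of `A`, witnessed by `μ`. -/
theorem stmt19 {Γ : Type*} [AddCommGroup Γ] [LinearOrder Γ] [IsOrderedAddMonoid Γ] [Module ℝ Γ]
    (μ : Finset Γ) (hμ : ∀ x ∈ μ, 0 < x)
    (a : ℝ) (ha : 0 < a) (g : Γ) (S : HahnSeries Γ ℝ)
    (hS : S.support ⊆ addPlus (μ : Set Γ))
    (A : HahnSeries Γ ℝ) (hA : A = (HahnSeries.single g a) * (1 + S)) (b : ℝ) :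
    ∃ T : HahnSeries Γ ℝ,
      (∀ x : Γ, T.coeff x =
        Real.rpow a b * ∑' j : ℕ, realChoose b j * (S ^ j).coeff (x - b • g)) ∧
      T.support ⊆ {y | ∃ p ∈ AddSubmonoid.closure (μ : Set Γ), y = b • g + p} ∧
      (b = -1 → A * T = 1) := by
  classical
  -- all elements of the closure are nonnegative
  have hclos : ∀ x ∈ AddSubmonoid.closure (μ : Set Γ), 0 ≤ x := by
    intro x hx
    induction hx using AddSubmonoid.closure_induction with
    | mem y hy => exact (hμ y hy).le
    | zero => exact le_refl 0
    | add y z _ _ hy hz => exact add_nonneg hy hz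
  have hPos : ∀ x ∈ S.support, 0 < x := by
    intro x hx
    obtain ⟨p, hp, q, hq, rfl⟩ := hS hx
    exact add_pos_of_pos_of_nonneg (hμ p hp) (hclos q hq)
  have hord : 0 < S.orderTop := by
    by_cases h0 : S = 0
    · simp [h0]
    · rw [HahnSeries.orderTop_of_ne_zero h0]
      exact_mod_cast hPos _ (S.isWF_support.min_mem _)
  -- the summable family of powers of S, rescaled by binomial coefficients
  set P : HahnSeries.SummableFamily Γ ℝ ℕ := HahnSeries.SummableFamily.powers S with hP
  set F : HahnSeries.SummableFamily Γ ℝ ℕ :=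
    HahnSeries.SummableFamily.rescale (realChoose b) P with hF
  have hFj : ∀ j : ℕ, F j = realChoose b j • S ^ j := fun j => by
    show realChoose b j • P j = _
    rw [hP, HahnSeries.SummableFamily.powers_of_orderTop_pos hord]
  set T : HahnSeries Γ ℝ := HahnSeries.single (b • g) (Real.rpow a b) * F.hsum with hT
  -- support of S^j lies in the closure
  have hpow : ∀ j : ℕ, (S ^ j).support ⊆ (AddSubmonoid.closure (μ : Set Γ) : Set Γ) := by
    intro j
    induction j with
    | zero =>
      intro x hx
      simp only [pow_zero] at hx
      have h1 : (1 : HahnSeries Γ ℝ).support ⊆ {0} := HahnSeries.support_single_subset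
      have := h1 hx
      rw [Set.mem_singleton_iff] at this
      rw [this]; exact AddSubmonoid.zero_mem _
    | succ n ih =>
      intro x hx
      rw [pow_succ] at hx
      obtain ⟨i, hi, j, hj, rfl⟩ := HahnSeries.support_mul_subset hx
      exact add_mem (ih hi) (addPlus_subset_closure _ (hS hj))
  -- coefficient formula
  have hcoeff : ∀ x : Γ, T.coeff x =
      Real.rpow a b * ∑' j : ℕ, realChoose b j * (S ^ j).coeff (x - b • g) := by
    intro x
    have h1 : T.coeff x = Real.rpow a b * F.hsum.coeff (x - b • g) := by
      have := HahnSeries.coeff_single_mul_add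
        (r := Real.rpow a b) (x := F.hsum) (a := x - b • g) (b := b • g)
      rw [hT, ← this, sub_add_cancel]
    rw [h1]
    congr 1
    rw [HahnSeries.SummableFamily.coeff_hsum]
    have hfin : (Function.support fun j : ℕ => realChoose b j * (S ^ j).coeff (x - b • g)).Finite :=
      (F.finite_co_support (x - b • g)).subset (by
        intro j hj
        simp only [Function.mem_support] at hj
        simp only [Set.mem_setOf_eq, hFj, HahnSeries.coeff_smul, smul_eq_mul]
        exact hj)
    rw [tsum_eq_finsum hfin]
    apply finsum_congr
    intro j
    simp [hFj, HahnSeries.coeff_smul, smul_eq_mul]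
  refine ⟨T, hcoeff, ?_, ?_⟩
  · -- support condition
    intro x hx
    rw [HahnSeries.mem_support, hcoeff x] at hx
    have hx' : (∑' j : ℕ, realChoose b j * (S ^ j).coeff (x - b • g)) ≠ 0 :=
      right_ne_zero_of_mul hx
    have hmem : x - b • g ∈ (AddSubmonoid.closure (μ : Set Γ) : Set Γ) := by
      by_contra hnot
      apply hx'
      have : ∀ j : ℕ, realChoose b j * (S ^ j).coeff (x - b • g) = 0 := by
        intro j
        rcases eq_or_ne ((S ^ j).coeff (x - b • g)) 0 with h | h
        · rw [h, mul_zero]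
        · exact absurd (hpow j h) hnot
      simp [this]
    exact ⟨x - b • g, hmem, by abel⟩
  · -- inverse when b = -1
    rintro rfl
    have hordneg : 0 < (-S).orderTop := by
      by_cases h0 : S = 0
      · simp [h0]
      · have h0' : (-S) ≠ 0 := neg_ne_zero.mpr h0
        rw [HahnSeries.orderTop_of_ne_zero h0']
        have : ∀ x ∈ (-S).support, 0 < x := by
          intro x hx
          apply hPos
          simpa [HahnSeries.mem_support] using hx
        exact_mod_cast this _ ((-S).isWF_support.min_mem _)
    have hFeq : F = HahnSeries.SummableFamily.powers (-S) := by
      apply HahnSeries.SummableFamily.ext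
      intro j
      rw [hFj, HahnSeries.SummableFamily.powers_of_orderTop_pos hordneg]
      rw [realChoose_neg_one]
      rcases Nat.even_or_odd j with h | h
      · rw [h.neg_one_pow, one_smul]
        exact (h.neg_pow S).symm
      · rw [h.neg_one_pow, neg_one_smul ℝ (S ^ j)]
        exact (h.neg_pow S).symm
    have hgeo : (1 + S) * F.hsum = 1 := by
      rw [hFeq]
      have := HahnSeries.SummableFamily.one_sub_self_mul_hsum_powers hordneg
      rwa [sub_neg_eq_add] at this
    rw [hA, hT]
    have hrpow : Real.rpow a (-1) = a⁻¹ := Real.rpow_neg_one a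
    rw [hrpow]
    calc HahnSeries.single g a * (1 + S) * (HahnSeries.single ((-1 : ℝ) • g) a⁻¹ * F.hsum)
        = (HahnSeries.single g a * HahnSeries.single ((-1 : ℝ) • g) a⁻¹) * ((1 + S) * F.hsum) := by
          ring
      _ = 1 := by
          rw [HahnSeries.single_mul_single, hgeo, mul_one]
          have hg : g + (-1 : ℝ) • g = 0 := by
            rw [neg_one_smul]; abel
          rw [hg, mul_inv_cancel₀ ha.ne']
          exact HahnSeries.single_zero_one
end
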